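/- Let O be a Dedekind domain that is finite and flat over Z, and let t : O → Z be a nonzero Z-linear map. Then the O-linear map O → Hom_Z(O, Z) sending a ∈ O to the Z-linear map x ↦ t(ax) is injective with finite cokernel. -/

import Mathlib

open Matrix

/-- Auxiliary: an injective endomorphism of a finite free ℤ-module has
"finite cokernel" in the sense that some nonzero integer multiple of every
element lies in the range. -/
lemma aux_det {M : Type} [AddCommGroup M] [Module ℤ M]
    [Module.Free ℤ M] [Module.Finite ℤ M]
    (f : M →ₗ[ℤ] M) (hf : Function.Injective f) :
    ∃ d : ℤ, d ≠ 0 ∧ ∀ x : M, ∃ y, d • x = f y := by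
  classical
  let b := Module.Free.chooseBasis ℤ M
  let A := LinearMap.toMatrix b b f
  have h1 : Matrix.toLin b b A = f := Matrix.toLin_toMatrix b b f
  have hA : A.det ≠ 0 := by
    intro h0
    obtain ⟨v, hv, hmv⟩ := (Matrix.exists_mulVec_eq_zero_iff (M := A)).mpr h0
    apply hv
    set x := b.equivFun.symm v with hx
    have hrepr : ⇑(b.repr x) = v := by
      funext i
      rw [← b.equivFun_apply, hx, b.equivFun.apply_symm_apply]
    have hmv' : ⇑(b.repr (f x)) = 0 := by
      rw [← LinearMap.toMatrix_mulVec_repr b b f x, hrepr]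
      exact hmv
    have hfx : f x = 0 := by
      apply b.repr.injective
      ext i
      simpa using congrFun hmv' i
    have hx0 : x = 0 := hf (by rw [hfx, map_zero])
    rw [← hrepr, hx0, map_zero]
    rfl
  refine ⟨A.det, hA, fun x => ?_⟩
  refine ⟨Matrix.toLin b b A.adjugate x, ?_⟩
  have h2 : f (Matrix.toLin b b A.adjugate x) = A.det • x := by
    rw [← h1, ← LinearMap.comp_apply, ← Matrix.toLin_mul b b b, Matrix.mul_adjugate,
      LinearEquiv.map_smul, Matrix.toLin_one]
    simp
    exact (Int.cast_smul_eq_zsmul ℤ A.det x)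
  exact h2.symm

/-- Let `O` be a Dedekind domain that is finite and flat over ℤ, and let
`t : O → ℤ` be a nonzero ℤ-linear map.  Then the `O`-linear map `O → Hom_ℤ(O, ℤ)`
sending `a` to `x ↦ t (a * x)` is injective with finite cokernel. -/
theorem stmt1
    (O : Type) [CommRing O] [IsDomain O] [IsDedekindDomain O]
    [Module.Finite ℤ O] [Module.Flat ℤ O]
    (t : O →ₗ[ℤ] ℤ) (ht : t ≠ 0) :
    Function.Injective (fun a : O => t.comp (LinearMap.mulLeft ℤ a)) ∧
    ∃ S : AddSubgroup (O →ₗ[ℤ] ℤ),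
      (∀ g : O →ₗ[ℤ] ℤ, g ∈ S ↔ ∃ a : O, g = t.comp (LinearMap.mulLeft ℤ a)) ∧
      S.FiniteIndex := by
  classical
  -- O is torsion-free over ℤ, hence free.
  have hreg : ∀ n : ℤ, n ≠ 0 → IsSMulRegular O n := by
    intro n hn
    have h1 : IsSMulRegular ℤ n := fun a c h => by
      simpa [smul_eq_mul] using mul_left_cancel₀ hn h
    have h2 : IsSMulRegular (TensorProduct ℤ O ℤ) n := h1.lTensor O
    intro x y hxy
    have hxy' : n • x = n • y := hxy
    have h3 : n • (TensorProduct.rid ℤ O).symm x = n • (TensorProduct.rid ℤ O).symm y := by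
      rw [← (TensorProduct.rid ℤ O).symm.map_smul, ← (TensorProduct.rid ℤ O).symm.map_smul, hxy']
    exact (TensorProduct.rid ℤ O).symm.injective (h2 h3)
  haveI : NoZeroSMulDivisors ℤ O := by
    refine ⟨fun {c x} h => ?_⟩
    rcases eq_or_ne c 0 with hc | hc
    · exact Or.inl hc
    · refine Or.inr (hreg c hc ?_)
      simpa using h
  haveI : Module.Free ℤ O := Module.free_of_finite_type_torsion_free'
  -- the linear map φ : a ↦ (x ↦ t (a * x))
  let φ : O →ₗ[ℤ] (O →ₗ[ℤ] ℤ) :=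
    { toFun := fun a => t.comp (LinearMap.mulLeft ℤ a)
      map_add' := fun a c => by
        ext x
        show t ((a + c) * x) = t (a * x) + t (c * x)
        rw [add_mul, map_add]
      map_smul' := fun n a => by
        ext x
        show t ((n • a) * x) = n • t (a * x)
        rw [smul_mul_assoc, t.map_smul] }
  have hinj : Function.Injective φ := by
    rw [injective_iff_map_eq_zero]
    intro a ha
    by_contra h0
    have hmul : Function.Injective (LinearMap.mulLeft ℤ a) := by
      intro x y hxy
      exact mul_left_cancel₀ h0 hxy
    obtain ⟨d, hd, hsur⟩ := aux_det (LinearMap.mulLeft ℤ a) hmul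
    apply ht
    ext x
    obtain ⟨y, hy⟩ := hsur x
    have h1 : d • t x = 0 := by
      rw [← t.map_smul, hy]
      simpa [φ] using LinearMap.congr_fun ha y
    have : t x = 0 := by
      rcases smul_eq_zero.mp h1 with h | h
      · exact absurd h hd
      · exact h
    simpa using this
  refine ⟨hinj, ?_⟩
  -- the cokernel part
  haveI : Module.Free ℤ (O →ₗ[ℤ] ℤ) := Module.Free.linearMap _ _ _ _
  haveI : Module.Finite ℤ (O →ₗ[ℤ] ℤ) := Module.Finite.linearMap _ _ _ _
  let b := Module.Free.chooseBasis ℤ O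
  let e : (O →ₗ[ℤ] ℤ) ≃ₗ[ℤ] O := (b.dualBasis).equiv b (Equiv.refl _)
  have hfinj : Function.Injective (e.toLinearMap ∘ₗ φ) := by
    intro x y hxy
    exact hinj (e.injective hxy)
  obtain ⟨d, hd, hsur⟩ := aux_det (e.toLinearMap ∘ₗ φ) hfinj
  refine ⟨(LinearMap.range φ).toAddSubgroup, ?_, ?_⟩
  · intro g
    constructor
    · rintro ⟨a, rfl⟩
      exact ⟨a, rfl⟩
    · rintro ⟨a, rfl⟩
      exact ⟨a, rfl⟩
  · have hq : Finite ((O →ₗ[ℤ] ℤ) ⧸ LinearMap.range φ) := by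
      apply Module.finite_of_fg_torsion
      intro x
      obtain ⟨g, rfl⟩ := Submodule.Quotient.mk_surjective _ x
      refine ⟨⟨d, mem_nonZeroDivisors_of_ne_zero hd⟩, ?_⟩
      have hmem : d • g ∈ LinearMap.range φ := by
        obtain ⟨y, hy⟩ := hsur (e g)
        refine ⟨y, e.injective ?_⟩
        rw [e.map_smul, hy]
        rfl
      have : (⟨d, mem_nonZeroDivisors_of_ne_zero hd⟩ : nonZeroDivisors ℤ) •
          (Submodule.Quotient.mk g : (O →ₗ[ℤ] ℤ) ⧸ LinearMap.range φ)
          = Submodule.Quotient.mk (d • g) := rfl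
      rw [this, Submodule.Quotient.mk_eq_zero]
      exact hmem
    have hq' : Finite ((O →ₗ[ℤ] ℤ) ⧸ (LinearMap.range φ).toAddSubgroup) := hq
    exact AddSubgroup.finiteIndex_of_finite_quotient
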